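/- Let (V, I) be an interval system such that D(V, I) has finite length. Then the following are equivalent: (i) D(V, I) is atomistic; (ii) D(V, I) is geometric; (iii) D(V, I) is dually atomistic; (iv) (V, I) has no proper strong intervals (strong sets other than ∅, V, and singletons). -/

import Mathlib

variable {V : Type*}

/-- `Q` is a closure system on `V`: it contains `V` and is closed under
intersections of nonempty subfamilies. -/
def IsClosureSystem (Q : Set (Set V)) : Prop :=
  Set.univ ∈ Q ∧ ∀ F ⊆ Q, F.Nonempty → ⋂₀ F ∈ Q

/-- Algebraic: the union of any nonempty chain of closed sets is closed. -/
def IsAlgebraicSystem (Q : Set (Set V)) : Prop :=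
  ∀ C ⊆ Q, C.Nonempty → IsChain (· ⊆ ·) C → ⋃₀ C ∈ Q

/-- Condition (I₀): the empty set and all singletons are closed. -/
def CondI0 (Q : Set (Set V)) : Prop := ∅ ∈ Q ∧ ∀ x : V, {x} ∈ Q

/-- Condition (I₁): the union of two intersecting members is a member. -/
def CondI1 (Q : Set (Set V)) : Prop :=
  ∀ A ∈ Q, ∀ B ∈ Q, (A ∩ B).Nonempty → A ∪ B ∈ Q

/-- Condition (I₂): differences of properly overlapping members are members. -/
def CondI2 (Q : Set (Set V)) : Prop :=
  ∀ A ∈ Q, ∀ B ∈ Q, (A ∩ B).Nonempty → ¬ A ⊆ B → ¬ B ⊆ A → A \ B ∈ Q ∧ B \ A ∈ Q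

/-- An interval system: an algebraic closure system satisfying (I₀), (I₁), (I₂). -/
def IsIntervalSystem (Q : Set (Set V)) : Prop :=
  IsClosureSystem Q ∧ IsAlgebraicSystem Q ∧ CondI0 Q ∧ CondI1 Q ∧ CondI2 Q

/-- `A` is a strong set of the closure system `Q`. -/
def IsStrong (Q : Set (Set V)) (A : Set V) : Prop :=
  A ∈ Q ∧ ∀ B ∈ Q, (A ∩ B).Nonempty → A ⊆ B ∨ B ⊆ A

/-- A decomposition: a partition of `V` (coded as a setoid) all of whose
blocks belong to `Q`.  The refinement order on partitions corresponds to the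
order on `Setoid V` (finer below). -/
def IsDecomp (Q : Set (Set V)) (π : Setoid V) : Prop :=
  ∀ x : V, {y | π.r x y} ∈ Q

/-- The lattice `D(V,Q)` of decompositions, as a subtype of `Setoid V`
with the induced (refinement) partial order. -/
abbrev Decomp (Q : Set (Set V)) := {π : Setoid V // IsDecomp Q π}

variable (Q : Set (Set V))

/-- An atom of `D(V,Q)`: a decomposition strictly above `Δ = ⊥` with nothing
strictly between. -/
def DAtom (a : Decomp Q) : Prop :=
  (⊥ : Setoid V) < a.1 ∧ ∀ b : Decomp Q, b.1 < a.1 → b.1 = ⊥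

/-- A coatom of `D(V,Q)`. -/
def DCoatom (m : Decomp Q) : Prop :=
  m.1 < (⊤ : Setoid V) ∧ ∀ b : Decomp Q, m.1 < b.1 → b.1 = ⊤

/-- `D(V,Q)` is atomistic: every element is the join (in `D(V,Q)`) of the
atoms below it. -/
def DAtomistic : Prop :=
  ∀ π : Decomp Q, IsLUB {a : Decomp Q | DAtom Q a ∧ a ≤ π} π

/-- `D(V,Q)` is dually atomistic: every element is the meet of the coatoms
above it. -/
def DDuallyAtomistic : Prop :=
  ∀ π : Decomp Q, IsGLB {m : Decomp Q | DCoatom Q m ∧ π ≤ m} π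

/-- `D(V,Q)` is (upper) semimodular: if `a ⊓ b ≺ a` then `b ≺ a ⊔ b`. -/
def DSemimodular : Prop :=
  ∀ a b j m : Decomp Q, IsLUB {a, b} j → IsGLB {a, b} m →
    m ⋖ a → b ⋖ j

/-- A compact element of `D(V,Q)`. -/
def DCompact (k : Decomp Q) : Prop :=
  ∀ (S : Set (Decomp Q)) (j : Decomp Q), IsLUB S j → k ≤ j →
    ∃ F ⊆ S, F.Finite ∧ ∃ g : Decomp Q, IsLUB F g ∧ k ≤ g

/-- `D(V,Q)` is algebraic: complete and every element is the join of the
compact elements below it. -/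
def DAlgebraic : Prop :=
  (∀ S : Set (Decomp Q), ∃ j : Decomp Q, IsLUB S j) ∧
    ∀ π : Decomp Q, IsLUB {k : Decomp Q | DCompact Q k ∧ k ≤ π} π

/-- `D(V,Q)` is geometric: atomistic, semimodular and algebraic. -/
def DGeometric : Prop := DAtomistic Q ∧ DSemimodular Q ∧ DAlgebraic Q

/- ====================  auxiliary development  ==================== -/

namespace IntervalAux

variable {Q} {I : Set (Set V)}

/-- The block of `x` in a setoid. -/
def blk (b : Setoid V) (x : V) : Set V := {y | b.r x y}

lemma mem_blk_self (b : Setoid V) (x : V) : x ∈ blk b x := b.refl' x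

lemma blk_mem (d : Decomp I) (x : V) : blk d.1 x ∈ I := d.2 x

lemma blk_eq_of_rel {b : Setoid V} {x y : V} (h : b.r x y) : blk b x = blk b y := by
  ext z; constructor <;> intro hz
  · exact b.trans' (b.symm' h) hz
  · exact b.trans' h hz

lemma mem_blk_iff {b : Setoid V} {x y : V} : y ∈ blk b x ↔ b.r x y := Iff.rfl

lemma le_iff_rel {b c : Setoid V} : b ≤ c ↔ ∀ x y, b.r x y → c.r x y :=
  ⟨fun h x y hxy => h hxy, fun h x y hxy => h x y hxy⟩

lemma decomp_le_iff {b c : Decomp I} : b ≤ c ↔ b.1 ≤ c.1 := Iff.rfl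

lemma decomp_lt_iff {b c : Decomp I} : b < c ↔ b.1 < c.1 := by
  rw [lt_iff_le_and_ne, lt_iff_le_and_ne]
  constructor
  · rintro ⟨h1, h2⟩; exact ⟨h1, fun he => h2 (Subtype.ext he)⟩
  · rintro ⟨h1, h2⟩; exact ⟨h1, fun he => h2 (by rw [he])⟩

lemma not_le_iff {b c : Setoid V} : ¬ b ≤ c ↔ ∃ x y, b.r x y ∧ ¬ c.r x y := by
  rw [le_iff_rel]; push_neg; rfl

/-- The one-nontrivial-block setoid. -/
def sig (A : Set V) : Setoid V :=
  ⟨fun x y => x = y ∨ (x ∈ A ∧ y ∈ A), by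
    constructor
    · exact fun x => Or.inl rfl
    · rintro x y (rfl | ⟨h1, h2⟩); exacts [Or.inl rfl, Or.inr ⟨h2, h1⟩]
    · rintro x y z (rfl | ⟨h1, h2⟩) h; exact h
      rcases h with rfl | ⟨h3, h4⟩; exacts [Or.inr ⟨h1, h2⟩, Or.inr ⟨h1, h4⟩]⟩

lemma sig_rel {A : Set V} {x y : V} : (sig A).r x y ↔ x = y ∨ (x ∈ A ∧ y ∈ A) := Iff.rfl

lemma blk_sig_of_mem {A : Set V} {x : V} (hx : x ∈ A) : blk (sig A) x = A := by
  ext y; simp only [blk, Set.mem_setOf_eq, sig_rel]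
  constructor
  · rintro (rfl | ⟨_, h⟩); exacts [hx, h]
  · intro hy; exact Or.inr ⟨hx, hy⟩

lemma blk_sig_of_not_mem {A : Set V} {x : V} (hx : x ∉ A) : blk (sig A) x = {x} := by
  ext y; simp only [blk, Set.mem_setOf_eq, sig_rel, Set.mem_singleton_iff]
  constructor
  · rintro (rfl | ⟨h, _⟩); exacts [rfl, absurd h hx]
  · rintro rfl; exact Or.inl rfl

lemma sig_isDecomp (hQ : IsIntervalSystem I) {A : Set V} (hA : A ∈ I) :
    IsDecomp I (sig A) := by
  intro x
  by_cases hx : x ∈ A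
  · rw [show {y | (sig A).r x y} = A from blk_sig_of_mem hx]; exact hA
  · rw [show {y | (sig A).r x y} = {x} from blk_sig_of_not_mem hx]; exact hQ.2.2.1.2 x

lemma sig_le_iff {A : Set V} {c : Setoid V} : sig A ≤ c ↔ ∀ x ∈ A, ∀ y ∈ A, c.r x y := by
  constructor
  · intro h x hx y hy; exact h (Or.inr ⟨hx, hy⟩)
  · rintro h x y (rfl | ⟨h1, h2⟩); exacts [c.refl' x, h x h1 y h2]

lemma sig_mono {A B : Set V} (h : A ⊆ B) : sig A ≤ sig B := by
  rw [sig_le_iff]; intro x hx y hy; exact Or.inr ⟨h hx, h hy⟩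

lemma sig_inj {A B : Set V} (hA : A.Nontrivial) (hB : B.Nontrivial)
    (h : sig A = sig B) : A = B := by
  obtain ⟨x, hx, y, hy, hxy⟩ := hA
  have hxB : x ∈ B := by
    have : (sig B).r x y := by rw [← h]; exact Or.inr ⟨hx, hy⟩
    rcases this with rfl | ⟨h1, _⟩; exacts [absurd rfl hxy, h1]
  calc A = blk (sig A) x := (blk_sig_of_mem hx).symm
    _ = blk (sig B) x := by rw [h]
    _ = B := blk_sig_of_mem hxB

lemma sig_ne_bot {A : Set V} (hA : A.Nontrivial) : sig A ≠ ⊥ := by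
  obtain ⟨x, hx, y, hy, hxy⟩ := hA
  intro h
  have : (sig A).r x y := Or.inr ⟨hx, hy⟩
  rw [h] at this
  exact hxy this

lemma bot_isDecomp (hQ : IsIntervalSystem I) : IsDecomp I (⊥ : Setoid V) := by
  intro x
  have : {y | (⊥ : Setoid V).r x y} = {x} := by
    ext y; simp only [Set.mem_setOf_eq, Set.mem_singleton_iff]
    exact ⟨fun h => h.symm, fun h => h.symm⟩
  rw [this]; exact hQ.2.2.1.2 x

lemma top_isDecomp (hQ : IsIntervalSystem I) : IsDecomp I (⊤ : Setoid V) := by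
  intro x
  have : {y | (⊤ : Setoid V).r x y} = Set.univ := by
    ext y; simp only [Set.mem_setOf_eq, Set.mem_univ, iff_true]; trivial
  rw [this]; exact hQ.1.1

lemma inter_mem (hQ : IsIntervalSystem I) {A B : Set V} (hA : A ∈ I) (hB : B ∈ I)
    (h : (A ∩ B).Nonempty) : A ∩ B ∈ I := by
  have := hQ.1.2 {A, B} (by rintro X (rfl | rfl); exacts [hA, hB]) ⟨A, Or.inl rfl⟩
  rwa [Set.sInter_pair] at this
/- ============== completeness, maximal & minimal elements ============== -/

lemma decompGLB (hQ : IsIntervalSystem I) (S : Set (Decomp I)) :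
    ∃ g : Decomp I, IsGLB S g := by
  have hdec : IsDecomp I (sInf (Subtype.val '' S)) := by
    intro x
    have heq : {y | (sInf (Subtype.val '' S)).r x y} =
        ⋂₀ ((fun d : Decomp I => blk d.1 x) '' S) := by
      ext y
      simp only [Set.mem_setOf_eq, Set.sInter_image, Set.mem_iInter]
      constructor
      · intro h d hd; exact h d.1 ⟨d, hd, rfl⟩
      · rintro h r ⟨d, hd, rfl⟩; exact h d hd
    rw [heq]
    rcases S.eq_empty_or_nonempty with rfl | ⟨d, hd⟩
    · simp only [Set.image_empty, Set.sInter_empty]; exact hQ.1.1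
    · exact hQ.1.2 _ (by rintro X ⟨d', hd', rfl⟩; exact blk_mem d' x)
        ⟨blk d.1 x, ⟨d, hd, rfl⟩⟩
  refine ⟨⟨sInf (Subtype.val '' S), hdec⟩, ?_, ?_⟩
  · intro d hd
    exact sInf_le (α := Setoid V) ⟨d, hd, rfl⟩
  · intro b hb
    exact le_sInf (α := Setoid V) (by rintro r ⟨d, hd, rfl⟩; exact hb hd)

lemma decompLUB (hQ : IsIntervalSystem I) (S : Set (Decomp I)) :
    ∃ j : Decomp I, IsLUB S j := by
  obtain ⟨g, hg⟩ := decompGLB hQ (upperBounds S)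
  exact ⟨g, fun s hs => hg.2 fun u hu => hu hs, fun u hu => hg.1 hu⟩

variable (hfl : ∃ n : ℕ, ∀ c : LTSeries (Decomp I), c.length ≤ n)

include hfl in
lemma exists_maximal (T : Set (Decomp I)) (hT : T.Nonempty) :
    ∃ m ∈ T, ∀ x ∈ T, m ≤ x → x = m := by
  obtain ⟨n, hn⟩ := hfl
  by_contra h
  push_neg at h
  have h' : ∀ t : ↥T, ∃ s : ↥T, t.1 < s.1 := by
    rintro ⟨t, ht⟩
    obtain ⟨x, hx, hle, hne⟩ := h t ht
    exact ⟨⟨x, hx⟩, lt_of_le_of_ne hle (fun he => hne he.symm)⟩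
  choose f hf using h'
  obtain ⟨t0, ht0⟩ := hT
  have key : ∀ k : ℕ, (f^[k] ⟨t0, ht0⟩).1 < (f^[k+1] ⟨t0, ht0⟩).1 := by
    intro k
    rw [Function.iterate_succ_apply']
    exact hf _
  have hc : ∀ i : Fin (n + 1), (fun i : Fin (n + 2) => (f^[i.1] ⟨t0, ht0⟩).1)
      i.castSucc < (fun i : Fin (n + 2) => (f^[i.1] ⟨t0, ht0⟩).1) i.succ := by
    intro i
    simp only [Fin.coe_castSucc, Fin.val_succ]
    exact key i.1
  have := hn ⟨n + 1, fun i : Fin (n + 2) => (f^[i.1] ⟨t0, ht0⟩).1, hc⟩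
  simp at this

include hfl in
lemma exists_minimal (T : Set (Decomp I)) (hT : T.Nonempty) :
    ∃ m ∈ T, ∀ x ∈ T, x ≤ m → x = m := by
  obtain ⟨n, hn⟩ := hfl
  by_contra h
  push_neg at h
  have h' : ∀ t : ↥T, ∃ s : ↥T, s.1 < t.1 := by
    rintro ⟨t, ht⟩
    obtain ⟨x, hx, hle, hne⟩ := h t ht
    exact ⟨⟨x, hx⟩, lt_of_le_of_ne hle hne⟩
  choose f hf using h'
  obtain ⟨t0, ht0⟩ := hT
  have key : ∀ k : ℕ, (f^[k+1] ⟨t0, ht0⟩).1 < (f^[k] ⟨t0, ht0⟩).1 := by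
    intro k
    rw [Function.iterate_succ_apply']
    exact hf _
  have hc : ∀ i : Fin (n + 1), (fun i : Fin (n + 2) => (f^[n + 1 - i.1] ⟨t0, ht0⟩).1)
      i.castSucc < (fun i : Fin (n + 2) => (f^[n + 1 - i.1] ⟨t0, ht0⟩).1) i.succ := by
    intro i
    simp only [Fin.coe_castSucc, Fin.val_succ]
    have hi : i.1 ≤ n := Nat.lt_succ_iff.mp i.2
    have e1 : n + 1 - i.1 = (n - i.1) + 1 := by omega
    have e2 : n + 1 - (i.1 + 1) = n - i.1 := by omega
    rw [e1, e2]
    exact key _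
  have := hn ⟨n + 1, fun i : Fin (n + 2) => (f^[n + 1 - i.1] ⟨t0, ht0⟩).1, hc⟩
  simp at this

include hfl in
lemma exists_maximal_mem (hQ : IsIntervalSystem I) (F : Set (Set V))
    (hF : ∀ A ∈ F, A ∈ I ∧ A.Nontrivial) (hne : F.Nonempty) :
    ∃ M ∈ F, ∀ A ∈ F, M ⊆ A → A = M := by
  set T : Set (Decomp I) := {d | ∃ A ∈ F, d.1 = sig A} with hT
  obtain ⟨A0, hA0⟩ := hne
  obtain ⟨m, hm, hmax⟩ := exists_maximal hfl T
    ⟨⟨sig A0, sig_isDecomp hQ (hF A0 hA0).1⟩, A0, hA0, rfl⟩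
  obtain ⟨M, hMF, hMs⟩ := hm
  refine ⟨M, hMF, fun A hA hMA => ?_⟩
  have hd : (⟨sig A, sig_isDecomp hQ (hF A hA).1⟩ : Decomp I) ∈ T := ⟨A, hA, rfl⟩
  have hle : m ≤ ⟨sig A, sig_isDecomp hQ (hF A hA).1⟩ := by
    show m.1 ≤ sig A; rw [hMs]; exact sig_mono hMA
  have := hmax _ hd hle
  apply sig_inj (hF A hA).2 (hF M hMF).2
  rw [← hMs]; exact congrArg Subtype.val this

include hfl in
lemma exists_minimal_mem (hQ : IsIntervalSystem I) (F : Set (Set V))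
    (hF : ∀ A ∈ F, A ∈ I ∧ A.Nontrivial) (hne : F.Nonempty) :
    ∃ M ∈ F, ∀ A ∈ F, A ⊆ M → A = M := by
  set T : Set (Decomp I) := {d | ∃ A ∈ F, d.1 = sig A} with hT
  obtain ⟨A0, hA0⟩ := hne
  obtain ⟨m, hm, hmin⟩ := exists_minimal hfl T
    ⟨⟨sig A0, sig_isDecomp hQ (hF A0 hA0).1⟩, A0, hA0, rfl⟩
  obtain ⟨M, hMF, hMs⟩ := hm
  refine ⟨M, hMF, fun A hA hMA => ?_⟩
  have hd : (⟨sig A, sig_isDecomp hQ (hF A hA).1⟩ : Decomp I) ∈ T := ⟨A, hA, rfl⟩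
  have hle : (⟨sig A, sig_isDecomp hQ (hF A hA).1⟩ : Decomp I) ≤ m := by
    show sig A ≤ m.1; rw [hMs]; exact sig_mono hMA
  have := hmin _ hd hle
  apply sig_inj (hF A hA).2 (hF M hMF).2
  rw [← hMs]; exact congrArg Subtype.val this
/- ==================== merge machinery ==================== -/

/-- Union of all blocks of `b` meeting `C`. -/
def mdom (b : Setoid V) (C : Set V) : Set V := {y | ∃ z ∈ C, b.r z y}

lemma subset_mdom (b : Setoid V) (C : Set V) : C ⊆ mdom b C :=
  fun z hz => ⟨z, hz, b.refl' z⟩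

lemma blk_subset_mdom (b : Setoid V) {C : Set V} {z : V} (hz : z ∈ C) :
    blk b z ⊆ mdom b C := fun y hy => ⟨z, hz, hy⟩

lemma mdom_closed {b : Setoid V} {C : Set V} {x y : V}
    (hx : x ∈ mdom b C) (hxy : b.r x y) : y ∈ mdom b C := by
  obtain ⟨z, hz, hzx⟩ := hx
  exact ⟨z, hz, b.trans' hzx hxy⟩

/-- The decomposition obtained from `b` by merging all blocks meeting `C`. -/
def merge (b : Setoid V) (C : Set V) : Setoid V :=
  ⟨fun x y => b.r x y ∨ (x ∈ mdom b C ∧ y ∈ mdom b C), by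
    constructor
    · exact fun x => Or.inl (b.refl' x)
    · rintro x y (h | ⟨h1, h2⟩); exacts [Or.inl (b.symm' h), Or.inr ⟨h2, h1⟩]
    · rintro x y z (h | ⟨h1, h2⟩) (h' | ⟨h3, h4⟩)
      · exact Or.inl (b.trans' h h')
      · exact Or.inr ⟨mdom_closed h3 (b.symm' h), h4⟩
      · exact Or.inr ⟨h1, mdom_closed h2 h'⟩
      · exact Or.inr ⟨h1, h4⟩⟩

lemma merge_rel {b : Setoid V} {C : Set V} {x y : V} :
    (merge b C).r x y ↔ b.r x y ∨ (x ∈ mdom b C ∧ y ∈ mdom b C) := Iff.rfl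

lemma blk_merge_of_mem {b : Setoid V} {C : Set V} {x : V} (hx : x ∈ mdom b C) :
    blk (merge b C) x = mdom b C := by
  ext y
  simp only [blk, Set.mem_setOf_eq, merge_rel]
  constructor
  · rintro (h | ⟨_, h2⟩); exacts [mdom_closed hx h, h2]
  · intro hy; exact Or.inr ⟨hx, hy⟩

lemma blk_merge_of_not_mem {b : Setoid V} {C : Set V} {x : V} (hx : x ∉ mdom b C) :
    blk (merge b C) x = blk b x := by
  ext y
  simp only [blk, Set.mem_setOf_eq, merge_rel]
  constructor
  · rintro (h | ⟨h1, _⟩); exacts [h, absurd h1 hx]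
  · exact Or.inl

include hfl in
lemma mdom_mem (hQ : IsIntervalSystem I) (b : Decomp I) {C : Set V}
    (hC : C ∈ I) (hCnt : C.Nontrivial) : mdom b.1 C ∈ I := by
  set F : Set (Set V) := {A | A ∈ I ∧ C ⊆ A ∧ A ⊆ mdom b.1 C} with hF
  have hFprop : ∀ A ∈ F, A ∈ I ∧ A.Nontrivial := fun A hA =>
    ⟨hA.1, hCnt.mono hA.2.1⟩
  have hCF : C ∈ F := ⟨hC, le_refl _, subset_mdom _ _⟩
  obtain ⟨M, hMF, hMmax⟩ := exists_maximal_mem hfl hQ F hFprop ⟨C, hCF⟩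
  have hblk : ∀ z ∈ C, blk b.1 z ⊆ M := by
    intro z hz
    have h1 : C ∪ blk b.1 z ∈ I :=
      hQ.2.2.2.1 C hC (blk b.1 z) (blk_mem b z) ⟨z, hz, mem_blk_self _ _⟩
    have h2 : M ∪ (C ∪ blk b.1 z) ∈ I := by
      apply hQ.2.2.2.1 M hMF.1 _ h1
      obtain ⟨c, hc⟩ := hCnt.nonempty
      exact ⟨c, hMF.2.1 hc, Or.inl hc⟩
    have h3 : M ∪ (C ∪ blk b.1 z) ∈ F := by
      refine ⟨h2, fun c hc => Or.inr (Or.inl hc), ?_⟩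
      rintro y (hy | hy | hy)
      exacts [hMF.2.2 hy, subset_mdom _ _ hy, blk_subset_mdom _ hz hy]
    have := hMmax _ h3 Set.subset_union_left
    intro y hy
    rw [← this]
    exact Or.inr (Or.inr hy)
  have : mdom b.1 C = M := by
    apply Set.Subset.antisymm
    · rintro y ⟨z, hz, hzy⟩; exact hblk z hz hzy
    · exact hMF.2.2
  rw [this]; exact hMF.1

include hfl in
lemma merge_isDecomp (hQ : IsIntervalSystem I) (b : Decomp I) {C : Set V}
    (hC : C ∈ I) (hCnt : C.Nontrivial) : IsDecomp I (merge b.1 C) := by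
  intro x
  by_cases hx : x ∈ mdom b.1 C
  · rw [show {y | (merge b.1 C).r x y} = mdom b.1 C from blk_merge_of_mem hx]
    exact mdom_mem hfl hQ b hC hCnt
  · rw [show {y | (merge b.1 C).r x y} = blk b.1 x from blk_merge_of_not_mem hx]
    exact blk_mem b x

lemma le_merge (b : Setoid V) (C : Set V) : b ≤ merge b C :=
  fun _ _ h => Or.inl h

lemma sig_le_merge (b : Setoid V) (C : Set V) : sig C ≤ merge b C := by
  rintro x y (rfl | ⟨h1, h2⟩)
  · exact Or.inl (b.refl' x)
  · exact Or.inr ⟨subset_mdom _ _ h1, subset_mdom _ _ h2⟩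

lemma merge_le {b u : Setoid V} {C : Set V} (hb : b ≤ u) (hC : sig C ≤ u) :
    merge b C ≤ u := by
  rintro x y (h | ⟨⟨z, hz, hzx⟩, ⟨z', hz', hz'y⟩⟩)
  · exact hb h
  · have h1 : u.r x z := u.symm' (hb hzx)
    have h2 : u.r z z' := hC (Or.inr ⟨hz, hz'⟩)
    exact u.trans' (u.trans' h1 h2) (hb hz'y)

include hfl in
lemma merge_isLUB (hQ : IsIntervalSystem I) (b : Decomp I) {C : Set V}
    (hC : C ∈ I) (hCnt : C.Nontrivial) :
    IsLUB {b, (⟨sig C, sig_isDecomp hQ hC⟩ : Decomp I)}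
      ⟨merge b.1 C, merge_isDecomp hfl hQ b hC hCnt⟩ := by
  constructor
  · rintro d (rfl | rfl)
    · exact le_merge _ _
    · exact sig_le_merge _ _
  · intro u hu
    exact merge_le (hu (Or.inl rfl)) (hu (Or.inr rfl))

/-- A minimal nontrivial member of `I`. -/
def MinMem (I : Set (Set V)) (C : Set V) : Prop :=
  C ∈ I ∧ C.Nontrivial ∧ ∀ D ∈ I, D ⊆ C → D.Nontrivial → D = C

lemma merge_cover (hQ : IsIntervalSystem I) (b : Decomp I) {C : Set V}
    (hmin : MinMem I C) (ρ : Decomp I)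
    (hlt : b.1 < ρ.1) (hle : ρ.1 ≤ merge b.1 C) : ρ.1 = merge b.1 C := by
  obtain ⟨u, v, huv, hbuv⟩ := not_le_iff.mp hlt.not_ge
  have hmuv : (merge b.1 C).r u v := hle huv
  rcases hmuv with h | ⟨⟨z, hz, hzu⟩, ⟨z', hz', hz'v⟩⟩
  · exact absurd h hbuv
  · have hzz' : z ≠ z' := by
      rintro rfl
      exact hbuv (b.1.trans' (b.1.symm' hzu) hz'v)
    have hbρ : b.1 ≤ ρ.1 := hlt.le
    have hzU : ρ.1.r u z := ρ.1.symm' (hbρ hzu)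
    have hz'U : ρ.1.r u z' := ρ.1.trans' huv (ρ.1.symm' (hbρ hz'v))
    -- U := blk ρ.1 u ; U ∩ C is a nontrivial member inside C, hence = C
    have hUC : blk ρ.1 u ∩ C ∈ I :=
      inter_mem hQ (blk_mem ρ u) hmin.1 ⟨z, hzU, hz⟩
    have hUCnt : (blk ρ.1 u ∩ C).Nontrivial :=
      ⟨z, ⟨hzU, hz⟩, z', ⟨hz'U, hz'⟩, hzz'⟩
    have hCU : C ⊆ blk ρ.1 u := by
      have := hmin.2.2 _ hUC Set.inter_subset_right hUCnt
      intro c hc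
      have : c ∈ blk ρ.1 u ∩ C := by rw [this]; exact hc
      exact this.1
    have hmdomU : mdom b.1 C ⊆ blk ρ.1 u := by
      rintro y ⟨w, hw, hwy⟩
      exact ρ.1.trans' (hCU hw) (hbρ hwy)
    apply le_antisymm hle
    rintro x y (h | ⟨hx, hy⟩)
    · exact hbρ h
    · exact ρ.1.trans' (ρ.1.symm' (hmdomU hx)) (hmdomU hy)
/- ==================== atoms ==================== -/

lemma sig_blk_le {b : Setoid V} (x : V) : sig (blk b x) ≤ b := by
  rw [sig_le_iff]
  intro u hu w hw
  exact b.trans' (b.symm' hu) hw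

omit hfl in
lemma atom_iff (hQ : IsIntervalSystem I) (a : Decomp I) :
    DAtom I a ↔ ∃ C, MinMem I C ∧ a.1 = sig C := by
  constructor
  · rintro ⟨hbot, hmax⟩
    obtain ⟨x, y, hxy, hne⟩ : ∃ x y, a.1.r x y ∧ x ≠ y := by
      obtain ⟨x, y, h1, h2⟩ := not_le_iff.mp hbot.not_ge
      exact ⟨x, y, h1, fun he => h2 he⟩
    set B := blk a.1 x with hB
    have hBnt : B.Nontrivial := ⟨x, mem_blk_self _ _, y, hxy, hne⟩
    have hBI : B ∈ I := blk_mem a x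
    have hsig : sig B ≤ a.1 := sig_blk_le x
    have heq : a.1 = sig B := by
      by_contra hne'
      have := hmax ⟨sig B, sig_isDecomp hQ hBI⟩ (lt_of_le_of_ne hsig (fun h => hne' h.symm))
      exact sig_ne_bot hBnt this
    refine ⟨B, ⟨hBI, hBnt, ?_⟩, heq⟩
    intro D hD hDB hDnt
    have hsd : sig D ≤ a.1 := heq ▸ sig_mono hDB
    by_contra hne'
    have hne'' : sig D ≠ a.1 := by
      rw [heq]; intro h; exact hne' (sig_inj hDnt hBnt h)
    have := hmax ⟨sig D, sig_isDecomp hQ hD⟩ (lt_of_le_of_ne hsd hne'')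
    exact sig_ne_bot hDnt this
  · rintro ⟨C, ⟨hCI, hCnt, hCmin⟩, heq⟩
    constructor
    · refine lt_of_le_of_ne bot_le ?_
      rw [heq]; exact fun h => sig_ne_bot hCnt h.symm
    · intro b hb
      by_contra hbne
      obtain ⟨x, y, hxy, hne⟩ : ∃ x y, b.1.r x y ∧ x ≠ y := by
        obtain ⟨x, y, h1, h2⟩ := not_le_iff.mp (fun hle : b.1 ≤ ⊥ =>
          hbne (le_antisymm hle bot_le))
        exact ⟨x, y, h1, h2⟩
      have hble : b.1 ≤ sig C := heq ▸ hb.le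
      have hblkC : blk b.1 x ⊆ C := by
        have hxC : x ∈ C ∧ y ∈ C := by
          rcases hble hxy with h | h; exacts [absurd h hne, h]
        intro w hw
        rcases hble hw with h | h
        · rw [← h]; exact hxC.1
        · exact h.2
      have hblkNt : (blk b.1 x).Nontrivial :=
        ⟨x, mem_blk_self _ _, y, hxy, hne⟩
      have hbc : blk b.1 x = C := hCmin _ (blk_mem b x) hblkC hblkNt
      have : sig C ≤ b.1 := by
        rw [← hbc]; exact sig_blk_le x
      exact hb.ne (le_antisymm hb.le (heq ▸ this))

omit hfl in
lemma sig_minmem_atom (hQ : IsIntervalSystem I) {C : Set V} (h : MinMem I C) :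
    DAtom I (⟨sig C, sig_isDecomp hQ h.1⟩ : Decomp I) :=
  (atom_iff hQ _).mpr ⟨C, h, rfl⟩

include hfl in
lemma exists_minmem (hQ : IsIntervalSystem I) {B : Set V} (hB : B ∈ I)
    (hBnt : B.Nontrivial) : ∃ C, MinMem I C ∧ C ⊆ B := by
  obtain ⟨M, hMF, hMmin⟩ := exists_minimal_mem hfl hQ {D | D ∈ I ∧ D ⊆ B ∧ D.Nontrivial}
    (fun D hD => ⟨hD.1, hD.2.2⟩) ⟨B, hB, le_refl _, hBnt⟩
  refine ⟨M, ⟨hMF.1, hMF.2.2, ?_⟩, hMF.2.1⟩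
  intro D hD hDM hDnt
  exact hMmin D ⟨hD, hDM.trans hMF.2.1, hDnt⟩ hDM

/-- A minimal nontrivial member meeting a strong nontrivial set is inside it. -/
lemma minmem_strong {A C : Set V} (hA : IsStrong I A) (hAnt : A.Nontrivial)
    (hC : MinMem I C) (hmeet : (C ∩ A).Nonempty) : C ⊆ A := by
  rcases hA.2 C hC.1 (by rwa [Set.inter_comm]) with h | h
  · -- A ⊆ C, A nontrivial, C minimal ⇒ A = C
    have := hC.2.2 A hA.1 h hAnt
    rw [← this]
  · exact h
/- ==================== connectivity by minimal members ==================== -/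

/-- One step: `x` and `y` lie in a common minimal nontrivial member inside `B`. -/
def Step (I : Set (Set V)) (B : Set V) (x y : V) : Prop :=
  ∃ C, MinMem I C ∧ C ⊆ B ∧ x ∈ C ∧ y ∈ C

/-- Connectivity inside `B` via minimal nontrivial members. -/
def Conn (I : Set (Set V)) (B : Set V) (x y : V) : Prop :=
  Relation.ReflTransGen (Step I B) x y

omit hfl in
lemma step_symm {B : Set V} {x y : V} (h : Step I B x y) : Step I B y x := by
  obtain ⟨C, h1, h2, h3, h4⟩ := h; exact ⟨C, h1, h2, h4, h3⟩

omit hfl in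
lemma conn_symm {B : Set V} {x y : V} (h : Conn I B x y) : Conn I B y x := by
  induction h with
  | refl => exact Relation.ReflTransGen.refl
  | tail _ hstep ih => exact Relation.ReflTransGen.head (step_symm hstep) ih

omit hfl in
lemma conn_mono {B B' : Set V} (hBB : B ⊆ B') {x y : V} (h : Conn I B x y) :
    Conn I B' x y := by
  refine Relation.ReflTransGen.mono ?_ _ _ h
  rintro u v ⟨C, h1, h2, h3, h4⟩
  exact ⟨C, h1, h2.trans hBB, h3, h4⟩

omit hfl in
lemma conn_mem {B : Set V} {x y : V} (hx : x ∈ B) (h : Conn I B x y) : y ∈ B := by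
  induction h with
  | refl => exact hx
  | tail _ hstep _ => obtain ⟨C, _, h2, _, h4⟩ := hstep; exact h2 h4

omit hfl in
lemma step_subset_conn {B C : Set V} (hC : MinMem I C) (hCB : C ⊆ B) {x : V}
    (hx : x ∈ C) : C ⊆ {y | Conn I B x y} := fun y hy =>
  Relation.ReflTransGen.single ⟨C, hC, hCB, hx, hy⟩

include hfl in
/-- The connectivity class of `x` inside `B` is a member. -/
lemma conn_class_mem (hQ : IsIntervalSystem I) (B : Set V) (x : V) :
    {y | Conn I B x y} ∈ I := by
  set K := {y | Conn I B x y} with hK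
  set F : Set (Set V) := {A | A ∈ I ∧ x ∈ A ∧ A ⊆ K ∧ A.Nontrivial} with hF
  by_cases hne : F.Nonempty
  · obtain ⟨M, hMF, hMmax⟩ := exists_maximal_mem hfl hQ F (fun A hA => ⟨hA.1, hA.2.2.2⟩) hne
    have hKM : K ⊆ M := by
      intro y hy
      induction hy with
      | refl => exact hMF.2.1
      | @tail z y _hzy hstep ih =>
        obtain ⟨C, hC, hCB, hzC, hyC⟩ := hstep
        have hzK : Conn I B x z := _hzy
        have hCK : C ⊆ K := by
          intro c hc
          exact Relation.ReflTransGen.tail hzK ⟨C, hC, hCB, hzC, hc⟩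
        have hMC : M ∪ C ∈ I := hQ.2.2.2.1 M hMF.1 C hC.1 ⟨z, ih, hzC⟩
        have : M ∪ C ∈ F :=
          ⟨hMC, Or.inl hMF.2.1, Set.union_subset hMF.2.2.1 hCK,
            hMF.2.2.2.mono Set.subset_union_left⟩
        have heq := hMmax _ this Set.subset_union_left
        rw [← heq]
        exact Or.inr hyC
    have : K = M := Set.Subset.antisymm hKM hMF.2.2.1
    rw [this]; exact hMF.1
  · have : K = {x} := by
      apply Set.Subset.antisymm
      · intro y hy
        rcases (Relation.ReflTransGen.cases_head hy) with rfl | ⟨z, hstep, _⟩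
        · rfl
        · obtain ⟨C, hC, hCB, hxC, hzC⟩ := hstep
          exfalso
          apply hne
          refine ⟨C, hC.1, hxC, ?_, hC.2.1⟩
          exact step_subset_conn hC hCB hxC
      · rintro y rfl; exact Relation.ReflTransGen.refl
    rw [this]; exact hQ.2.2.1.2 x

/-- No proper strong member. -/
def NoProperStrong (I : Set (Set V)) : Prop :=
  ∀ A : Set V, IsStrong I A → A = ∅ ∨ A = Set.univ ∨ ∃ x : V, A = {x}

omit hfl in
lemma nontrivial_of_proper {A : Set V} (h1 : A.Nonempty) (h2 : ∀ x : V, A ≠ {x}) :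
    A.Nontrivial := by
  obtain ⟨a, ha⟩ := h1
  by_contra hnt
  rw [Set.not_nontrivial_iff] at hnt
  exact h2 a (Set.eq_singleton_iff_unique_mem.mpr ⟨ha, fun b hb => hnt hb ha⟩)

include hfl in
/-- Key connectivity theorem: with no proper strong sets, every nontrivial
member is connected by minimal nontrivial members inside it. -/
theorem conn_of_noProperStrong (hQ : IsIntervalSystem I) (hns : NoProperStrong I) :
    ∀ B, B ∈ I → B.Nontrivial → ∀ x ∈ B, ∀ y ∈ B, Conn I B x y := by
  by_contra hcon
  push_neg at hcon
  set Bad : Set (Set V) := {B | B ∈ I ∧ B.Nontrivial ∧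
    ∃ x ∈ B, ∃ y ∈ B, ¬ Conn I B x y} with hBad
  have hBadne : Bad.Nonempty := by
    obtain ⟨B, h1, h2, x, hx, y, hy, h3⟩ := hcon
    exact ⟨B, h1, h2, x, hx, y, hy, h3⟩
  obtain ⟨B, hBBad, hBmin⟩ := exists_minimal_mem hfl hQ Bad
    (fun A hA => ⟨hA.1, hA.2.1⟩) hBadne
  obtain ⟨hBI, hBnt, x₀, hx₀, y₀, hy₀, hnc⟩ := hBBad
  -- every nontrivial member strictly inside B is connected
  have hIH : ∀ D, D ∈ I → D.Nontrivial → D ⊆ B → D ≠ B →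
      ∀ u ∈ D, ∀ v ∈ D, Conn I D u v := by
    intro D hDI hDnt hDB hDne u hu v hv
    by_contra hc
    exact hDne (hBmin D ⟨hDI, hDnt, u, hu, v, hv, hc⟩ hDB)
  -- pick a minimal member inside B and its connectivity class R
  obtain ⟨C₀, hC₀, hC₀B⟩ := exists_minmem hfl hQ hBI hBnt
  obtain ⟨x₁, hx₁⟩ := hC₀.2.1.nonempty
  set R := {y | Conn I B x₁ y} with hR
  have hx₁B : x₁ ∈ B := hC₀B hx₁
  have hRB : R ⊆ B := fun y hy => conn_mem hx₁B hy
  have hC₀R : C₀ ⊆ R := step_subset_conn hC₀ hC₀B hx₁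
  have hRnt : R.Nontrivial := hC₀.2.1.mono hC₀R
  have hRI : R ∈ I := conn_class_mem hfl hQ B x₁
  have hRneB : R ≠ B := by
    intro h
    apply hnc
    have hx₀R : Conn I B x₁ x₀ := by have : x₀ ∈ R := h ▸ hx₀; exact this
    have hy₀R : Conn I B x₁ y₀ := by have : y₀ ∈ R := h ▸ hy₀; exact this
    exact Relation.ReflTransGen.trans (conn_symm hx₀R) hy₀R
  -- auxiliary: nontrivial members properly inside B meeting R are inside R
  have habs : ∀ D, D ∈ I → D ⊆ B → D ≠ B → (D ∩ R).Nonempty → D ⊆ R := by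
    intro D hDI hDB hDne hmeet
    obtain ⟨z, hzD, hzR⟩ := hmeet
    by_cases hDnt : D.Nontrivial
    · intro w hw
      have : Conn I D z w := hIH D hDI hDnt hDB hDne z hzD w hw
      exact Relation.ReflTransGen.trans hzR (conn_mono hDB this)
    · rw [Set.not_nontrivial_iff] at hDnt
      intro w hw
      rw [hDnt hw hzD]; exact hzR
  -- R is strong
  have hRstrong : IsStrong I R := by
    refine ⟨hRI, fun E hEI hmeet => ?_⟩
    by_contra hcon2
    push_neg at hcon2
    obtain ⟨hnRE, hnER⟩ := hcon2
    obtain ⟨z, hzR, hzE⟩ := hmeet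
    have hzB : z ∈ B := hRB hzR
    -- B ⊆ E is impossible
    have hnBE : ¬ B ⊆ E := fun h => hnRE (fun r hr => h (hRB hr))
    have hEBne : (E ∩ B).Nonempty := ⟨z, hzE, hzB⟩
    have hEBI : E ∩ B ∈ I := inter_mem hQ hEI hBI hEBne
    have hEBneB : E ∩ B ≠ B := fun h => hnBE (fun b hb => (show b ∈ E ∩ B by rw [h]; exact hb).1)
    have hEBR : E ∩ B ⊆ R := habs _ hEBI Set.inter_subset_right hEBneB ⟨z, ⟨hzE, hzB⟩, hzR⟩
    -- E ⊆ B is impossible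
    have hnEB : ¬ E ⊆ B := by
      intro h
      exact hnER (fun e he => hEBR ⟨he, h he⟩)
    -- apply I2
    have hI2 := hQ.2.2.2.2 E hEI B hBI hEBne hnEB hnBE
    have hBEI : B \ E ∈ I := hI2.2
    obtain ⟨r, hrR, hrE⟩ := Set.not_subset.mp hnRE
    have hrBE : r ∈ B \ E := ⟨hRB hrR, hrE⟩
    have hBEneB : B \ E ≠ B := by
      intro h
      have : z ∈ B \ E := by rw [h]; exact hzB
      exact this.2 hzE
    have hBER : B \ E ⊆ R := habs _ hBEI Set.diff_subset hBEneB ⟨r, hrBE, hrR⟩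
    -- now B ⊆ R, contradiction
    apply hRneB
    apply Set.Subset.antisymm hRB
    intro b hb
    by_cases hbE : b ∈ E
    · exact hEBR ⟨hbE, hb⟩
    · exact hBER ⟨hb, hbE⟩
  -- R is proper: contradiction
  rcases hns R hRstrong with h | h | ⟨w, h⟩
  · exact hRnt.nonempty.ne_empty h
  · apply hRneB
    apply Set.Subset.antisymm hRB
    rw [h]; exact fun b _ => trivial
  · obtain ⟨u, hu, v, hv, huv⟩ := hRnt
    rw [h] at hu hv
    exact huv (hu.trans hv.symm)
/- ==================== algebraicity ==================== -/

include hfl in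
lemma dAlgebraic (hQ : IsIntervalSystem I) : DAlgebraic I := by
  refine ⟨decompLUB hQ, ?_⟩
  have hcompact : ∀ k : Decomp I, DCompact I k := by
    intro k S j hj hkj
    set T : Set (Decomp I) := {g | ∃ F ⊆ S, F.Finite ∧ IsLUB F g} with hT
    have hTne : T.Nonempty := by
      obtain ⟨g0, hg0⟩ := decompLUB hQ (∅ : Set (Decomp I))
      exact ⟨g0, ∅, Set.empty_subset _, Set.finite_empty, hg0⟩
    obtain ⟨g, hgT, hgmax⟩ := exists_maximal hfl T hTne
    obtain ⟨F, hFS, hFfin, hFg⟩ := hgT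
    have hub : ∀ s ∈ S, s ≤ g := by
      intro s hs
      obtain ⟨g', hg'⟩ := decompLUB hQ (insert s F)
      have hg'T : g' ∈ T := ⟨insert s F, Set.insert_subset hs hFS, hFfin.insert s, hg'⟩
      have hle : g ≤ g' := hFg.2 (fun u hu => hg'.1 (Set.mem_insert_of_mem s hu))
      have := hgmax g' hg'T hle
      rw [← this]
      exact hg'.1 (Set.mem_insert s F)
    have hjg : j ≤ g := hj.2 hub
    exact ⟨F, hFS, hFfin, g, hFg, hkj.trans hjg⟩
  intro π
  constructor
  · rintro k ⟨_, hk⟩; exact hk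
  · intro u hu
    exact hu ⟨hcompact π, le_refl π⟩

/- ==================== atom covering ==================== -/

include hfl in
lemma atom_cover (hQ : IsIntervalSystem I) {a b : Decomp I} (ha : DAtom I a)
    (hab : ¬ a ≤ b) :
    ∃ j : Decomp I, IsLUB {b, a} j ∧ b < j ∧
      ∀ ρ : Decomp I, b < ρ → ρ ≤ j → ρ = j := by
  obtain ⟨C, hC, heq⟩ := (atom_iff hQ a).mp ha
  have hCd : a = ⟨sig C, sig_isDecomp hQ hC.1⟩ := Subtype.ext heq
  set j : Decomp I := ⟨merge b.1 C, merge_isDecomp hfl hQ b hC.1 hC.2.1⟩ with hj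
  have hlub : IsLUB {b, a} j := by
    rw [hCd]
    exact merge_isLUB hfl hQ b hC.1 hC.2.1
  have hbj : b < j := by
    rcases lt_or_eq_of_le (hlub.1 (Or.inl rfl) : b ≤ j) with h | h
    · exact h
    · exfalso
      apply hab
      have : a ≤ j := hlub.1 (Or.inr rfl)
      rw [← h] at this
      exact this
  refine ⟨j, hlub, hbj, fun ρ hlt hle => ?_⟩
  exact Subtype.ext (merge_cover hQ b hC ρ (decomp_lt_iff.mp hlt) hle)

/- ==================== implication: NPS → atomistic ==================== -/

include hfl in
lemma atomistic_of_nps (hQ : IsIntervalSystem I) (hns : NoProperStrong I) :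
    DAtomistic I := by
  intro π
  constructor
  · rintro a ⟨_, h⟩; exact h
  · intro ρ hρ
    intro x y hxy
    set B := blk π.1 x with hB
    have hyB : y ∈ B := hxy
    by_cases hBnt : B.Nontrivial
    · have hconn : Conn I B x y :=
        conn_of_noProperStrong hfl hQ hns B (blk_mem π x) hBnt x (mem_blk_self _ _) y hyB
      have : ∀ v, Conn I B x v → ρ.1.r x v := by
        intro v hv
        induction hv with
        | refl => exact ρ.1.refl' x
        | @tail z v _hzv hstep ih =>
          obtain ⟨C, hC, hCB, hzC, hvC⟩ := hstep
          have haD : DAtom I (⟨sig C, sig_isDecomp hQ hC.1⟩ : Decomp I) :=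
            sig_minmem_atom hQ hC
          have haπ : (⟨sig C, sig_isDecomp hQ hC.1⟩ : Decomp I) ≤ π := by
            show sig C ≤ π.1
        
            rw [sig_le_iff]
            intro u hu w hw
            exact π.1.trans' (π.1.symm' (hCB hu : π.1.r x u)) (hCB hw : π.1.r x w)
          have hρa : (⟨sig C, sig_isDecomp hQ hC.1⟩ : Decomp I) ≤ ρ := hρ ⟨haD, haπ⟩
          have : ρ.1.r z v := hρa (Or.inr ⟨hzC, hvC⟩)
          exact ρ.1.trans' ih this
      exact this y hconn
    · rw [Set.not_nontrivial_iff] at hBnt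
      have : y = x := hBnt hyB (mem_blk_self _ _)
      subst this
      exact ρ.1.refl' y

/- ==================== implication: atomistic → NPS ==================== -/

include hfl in
lemma nps_of_atomistic (hQ : IsIntervalSystem I) (hAt : DAtomistic I) :
    NoProperStrong I := by
  intro A hstrong
  by_contra hcon
  push_neg at hcon
  obtain ⟨hne, hnu, hnsing⟩ := hcon
  have hAnt : A.Nontrivial := nontrivial_of_proper hne hnsing
  set T : Set (Decomp I) := {ρ | ∀ x ∈ A, blk ρ.1 x ⊆ A} with hT
  have hbotT : (⟨⊥, bot_isDecomp hQ⟩ : Decomp I) ∈ T := by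
    intro x hx y hy
    have : x = y := hy
    rw [← this]; exact hx
  obtain ⟨ρ, hρT, hρmax⟩ := exists_maximal hfl T ⟨_, hbotT⟩
  have hatoms : ∀ a : Decomp I, DAtom I a → a ≤ ρ := by
    intro a ha
    obtain ⟨C, hC, heq⟩ := (atom_iff hQ a).mp ha
    set j : Decomp I := ⟨merge ρ.1 C, merge_isDecomp hfl hQ ρ hC.1 hC.2.1⟩ with hj
    have hjT : j ∈ T := by
      by_cases hCA : (C ∩ A).Nonempty
      · have hCsubA : C ⊆ A := minmem_strong hstrong hAnt hC hCA
        have hmd : mdom ρ.1 C ⊆ A := by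
          rintro w ⟨z, hz, hzw⟩
          exact hρT z (hCsubA hz) hzw
        intro x hx
        by_cases hxm : x ∈ mdom ρ.1 C
        · rw [show blk j.1 x = mdom ρ.1 C from blk_merge_of_mem hxm]
          exact hmd
        · rw [show blk j.1 x = blk ρ.1 x from blk_merge_of_not_mem hxm]
          exact hρT x hx
      · have hmd : ∀ w ∈ mdom ρ.1 C, w ∉ A := by
          rintro w ⟨z, hz, hzw⟩ hwA
          apply hCA
          have : z ∈ blk ρ.1 w := ρ.1.symm' hzw
          exact ⟨z, hz, hρT w hwA this⟩
        intro x hx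
        have hxm : x ∉ mdom ρ.1 C := fun h => hmd x h hx
        rw [show blk j.1 x = blk ρ.1 x from blk_merge_of_not_mem hxm]
        exact hρT x hx
    have hle : ρ ≤ j := le_merge _ _
    have hjρ := hρmax j hjT hle
    show a.1 ≤ ρ.1
    rw [heq, ← hjρ]
    exact sig_le_merge _ _
  -- apply atomisticity at ⊤
  have htop := hAt ⟨⊤, top_isDecomp hQ⟩
  have hub : ρ ∈ upperBounds {a : Decomp I | DAtom I a ∧ a ≤ ⟨⊤, top_isDecomp hQ⟩} := by
    rintro a ⟨ha, _⟩; exact hatoms a ha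
  have : (⟨⊤, top_isDecomp hQ⟩ : Decomp I) ≤ ρ := htop.2 hub
  obtain ⟨x, hx⟩ := hAnt.nonempty
  apply hnu
  apply Set.eq_univ_of_univ_subset
  intro v _
  have : ρ.1.r x v := this (trivial : (⊤ : Setoid V).r x v)
  exact hρT x hx this

/- ==================== implication: dually atomistic → NPS ==================== -/

include hfl in
lemma nps_of_duallyAtomistic (hQ : IsIntervalSystem I) (hD : DDuallyAtomistic I) :
    NoProperStrong I := by
  intro A hstrong
  by_contra hcon
  push_neg at hcon
  obtain ⟨hne, hnu, hnsing⟩ := hcon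
  have hAnt : A.Nontrivial := nontrivial_of_proper hne hnsing
  have hcoatom : ∀ m : Decomp I, DCoatom I m → sig A ≤ m.1 := by
    intro m hm
    by_cases hc : ∃ z ∈ A, A ⊆ blk m.1 z
    · obtain ⟨z, hz, hsub⟩ := hc
      rw [sig_le_iff]
      intro u hu w hw
      exact m.1.trans' (m.1.symm' (hsub hu : m.1.r z u)) (hsub hw : m.1.r z w)
    · push_neg at hc
      -- every block of a point of A is ⊆ A
      have hblkA : ∀ z ∈ A, blk m.1 z ⊆ A := by
        intro z hz
        rcases hstrong.2 (blk m.1 z) (blk_mem m z)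
          ⟨z, hz, mem_blk_self _ _⟩ with h | h
        · exact absurd h (hc z hz)
        · exact h
      set j : Decomp I := ⟨merge m.1 A, merge_isDecomp hfl hQ m hstrong.1 hAnt⟩ with hj
      have hmdA : mdom m.1 A = A := by
        apply Set.Subset.antisymm
        · rintro w ⟨z, hz, hzw⟩; exact hblkA z hz hzw
        · exact subset_mdom _ _
      rcases eq_or_lt_of_le (le_merge m.1 A : m.1 ≤ j.1) with h | h
      · rw [h]; exact sig_le_merge _ _
      · exfalso
        have htop := hm.2 j h
        obtain ⟨z, hz⟩ := hAnt.nonempty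
        obtain ⟨w, hw⟩ : ∃ w, w ∉ A := by
          by_contra hno
          push_neg at hno
          exact hnu (Set.eq_univ_of_forall hno)
        have : j.1.r z w := by rw [htop]; trivial
        rcases this with h' | ⟨_, h2⟩
        · exact hw (hblkA z hz h')
        · rw [hmdA] at h2; exact hw h2
  -- apply dual atomisticity at ⊥
  have hbot := hD ⟨⊥, bot_isDecomp hQ⟩
  have hlb : (⟨sig A, sig_isDecomp hQ hstrong.1⟩ : Decomp I) ∈
      lowerBounds {m : Decomp I | DCoatom I m ∧ (⟨⊥, bot_isDecomp hQ⟩ : Decomp I) ≤ m} := by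
    rintro m ⟨hm, _⟩
    exact hcoatom m hm
  have hle : (⟨sig A, sig_isDecomp hQ hstrong.1⟩ : Decomp I) ≤ ⟨⊥, bot_isDecomp hQ⟩ :=
    hbot.2 hlb
  obtain ⟨u, hu, v, hv, huv⟩ := hAnt
  have : (⊥ : Setoid V).r u v := hle (Or.inr ⟨hu, hv⟩)
  exact huv this
/- ==================== semimodularity ==================== -/

include hfl in
lemma semimodular_of_atomistic (hQ : IsIntervalSystem I) (hAt : DAtomistic I) :
    DSemimodular I := by
  intro a b j m hj hm hcov
  have hma : m ≤ a := hm.1 (Or.inl rfl)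
  have hmb : m ≤ b := hm.1 (Or.inr rfl)
  have hmlta : m < a := hcov.1
  obtain ⟨c, hc, hca, hcm⟩ : ∃ c, DAtom I c ∧ c ≤ a ∧ ¬ c ≤ m := by
    by_contra h; push_neg at h
    exact hmlta.not_ge ((hAt a).2 (fun c hc => h c hc.1 hc.2))
  have hcb : ¬ c ≤ b := fun h =>
    hcm (hm.2 (by rintro d (rfl | rfl); exacts [hca, h]))
  obtain ⟨j', hj'lub, hbj', hj'cov⟩ := atom_cover hfl hQ hc hcb
  obtain ⟨m', hm'⟩ := decompLUB hQ {m, c}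
  have hm'a : m' ≤ a := hm'.2 (by rintro d (rfl | rfl); exacts [hma, hca])
  have hmm' : m < m' :=
    lt_of_le_of_ne (hm'.1 (Or.inl rfl))
      (fun h => hcm (by rw [h]; exact hm'.1 (Or.inr rfl)))
  have ham' : a = m' := by
    by_contra hne
    exact hcov.2 hmm' (lt_of_le_of_ne hm'a (fun h => hne h.symm))
  have haj' : a ≤ j' := by
    rw [ham']
    refine hm'.2 ?_
    rintro d (rfl | rfl)
    · exact hmb.trans (hj'lub.1 (Or.inl rfl))
    · exact hj'lub.1 (Or.inr rfl)
  have hj'j : IsLUB {a, b} j' := by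
    constructor
    · rintro d (rfl | rfl)
      · exact haj'
      · exact hj'lub.1 (Or.inl rfl)
    · intro u hu
      refine hj'lub.2 ?_
      rintro d (rfl | rfl)
      · exact hu (Or.inr rfl)
      · exact hca.trans (hu (Or.inl rfl))
  have hjj' : j = j' := hj.unique hj'j
  constructor
  · rw [hjj']; exact hbj'
  · intro z hz hzj
    rw [hjj'] at hzj
    exact hzj.ne (hj'cov z hz hzj.le)

/- ==================== NPS → dually atomistic ==================== -/

include hfl in
lemma duallyAtomistic_of_nps (hQ : IsIntervalSystem I) (hns : NoProperStrong I) :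
    DDuallyAtomistic I := by
  have hAt := atomistic_of_nps hfl hQ hns
  intro π
  constructor
  · rintro m ⟨_, h⟩; exact h
  · intro lam hlam
    by_contra hnle
    obtain ⟨a0, ha0, ha0l, ha0π⟩ : ∃ a0, DAtom I a0 ∧ a0 ≤ lam ∧ ¬ a0 ≤ π := by
      by_contra h; push_neg at h
      exact hnle ((hAt lam).2 (fun c hc => h c hc.1 hc.2))
    set T := {ρ : Decomp I | π ≤ ρ ∧ ¬ a0 ≤ ρ} with hT
    obtain ⟨b, hbT, hbmax⟩ := exists_maximal hfl T ⟨π, le_refl _, ha0π⟩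
    obtain ⟨j, hjlub, hbj, hjcov⟩ := atom_cover hfl hQ ha0 hbT.2
    have hkey : ∀ z : Decomp I, b < z → z ≤ j := by
      intro z hz
      apply (hAt z).2
      rintro c ⟨hc, hcz⟩
      by_cases hcb : c ≤ b
      · exact hcb.trans (hjlub.1 (Or.inl rfl))
      · obtain ⟨jc, hjclub, hbjc, hjccov⟩ := atom_cover hfl hQ hc hcb
        have ha0jc : a0 ≤ jc := by
          by_contra h
          have hmem : jc ∈ T := ⟨hbT.1.trans hbjc.le, h⟩
          exact hbjc.ne' (hbmax jc hmem hbjc.le)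
        have hjjc : j ≤ jc := hjlub.2 (by rintro d (rfl | rfl); exacts [hbjc.le, ha0jc])
        have hjeq : j = jc := hjccov j hbj hjjc
        exact (hjclub.1 (Or.inr rfl)).trans hjeq.ge
    have hcoat : DCoatom I b := by
      have hbtop : b.1 < ⊤ :=
        lt_of_le_of_ne le_top
          (fun h => hbT.2 (show a0.1 ≤ b.1 by rw [h]; exact le_top))
      refine ⟨hbtop, ?_⟩
      intro b' hb'
      have hbb' : b < b' := decomp_lt_iff.mpr hb'
      have ha0b' : a0 ≤ b' := by
        by_contra h
        have hmem : b' ∈ T := ⟨hbT.1.trans hbb'.le, h⟩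
        exact hbb'.ne' (hbmax b' hmem hbb'.le)
      have hb'j : b' ≤ j := hkey b' hbb'
      have hjb' : j ≤ b' := hjlub.2 (by rintro d (rfl | rfl); exacts [hbb'.le, ha0b'])
      have htopj : (⟨⊤, top_isDecomp hQ⟩ : Decomp I) ≤ j :=
        hkey ⟨⊤, top_isDecomp hQ⟩ (decomp_lt_iff.mpr hbtop)
      have hb'eq : b' = j := le_antisymm hb'j hjb'
      rw [hb'eq]
      exact le_antisymm le_top htopj
    have hble : lam ≤ b := hlam ⟨hcoat, hbT.1⟩
    exact hbT.2 (ha0l.trans hble)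

end IntervalAux


open IntervalAux in
/-- For an interval system whose decomposition lattice has finite length,
the following are equivalent: (i) `D(V,I)` is atomistic; (ii) `D(V,I)` is
geometric; (iii) `D(V,I)` is dually atomistic; (iv) `(V,I)` has no proper
strong intervals (every strong set is `∅`, `V`, or a singleton). -/
theorem stmt14 (I : Set (Set V)) (hI : IsIntervalSystem I)
    (hfl : ∃ n : ℕ, ∀ c : LTSeries (Decomp I), c.length ≤ n) :
    (DAtomistic I ↔ DGeometric I) ∧
    (DGeometric I ↔ DDuallyAtomistic I) ∧
    (DDuallyAtomistic I ↔
      ∀ A : Set V, IsStrong I A → A = ∅ ∨ A = Set.univ ∨ ∃ x : V, A = {x}) := by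
  have hAlg : DAlgebraic I := dAlgebraic hfl hI
  have hAG : DAtomistic I → DGeometric I := fun hA =>
    ⟨hA, semimodular_of_atomistic hfl hI hA, hAlg⟩
  have hDN : DDuallyAtomistic I → NoProperStrong I := nps_of_duallyAtomistic hfl hI
  have hND : NoProperStrong I → DDuallyAtomistic I := duallyAtomistic_of_nps hfl hI
  have hAN : DAtomistic I → NoProperStrong I := nps_of_atomistic hfl hI
  have hNA : NoProperStrong I → DAtomistic I := atomistic_of_nps hfl hI
  refine ⟨⟨hAG, fun hG => hG.1⟩, ⟨fun hG => hND (hAN hG.1), fun hD => hAG (hNA (hDN hD))⟩,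
    ⟨hDN, hND⟩⟩
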